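/- Under the Kalman condition, the optimal cost of the LQ problem satisfies S_T(x₁, x₂) = ½ p₀* Γ_T p₀ with p₀ = Γ_T⁻¹(e^{-TA}x₂ - x₁); equivalently S_T(x₁,x₂) = ½ (e^{-TA}x₂ - x₁)* Γ_T⁻¹ (e^{-TA}x₂ - x₁). -/

import Mathlib

open Matrix

/-- The controllability Gramian `Γ_t = ∫₀ᵗ e^{-τA} B Bᵀ e^{-τAᵀ} dτ` (entrywise integral). -/
noncomputable def Gram {n k : ℕ} (A : Matrix (Fin n) (Fin n) ℝ) (B : Matrix (Fin n) (Fin k) ℝ)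
    (t : ℝ) : Matrix (Fin n) (Fin n) ℝ :=
  fun i j => ∫ τ in (0:ℝ)..t,
    (NormedSpace.exp (-τ • A) * B * Bᵀ * NormedSpace.exp (-τ • Aᵀ)) i j

set_option maxHeartbeats 1000000

namespace LQ8Aux

variable {n k : ℕ}

/-- Continuity of the exponential curve. -/
lemma expCont (A : Matrix (Fin n) (Fin n) ℝ) :
    Continuous fun τ : ℝ => NormedSpace.exp (-τ • A) := by
  letI : NormedRing (Matrix (Fin n) (Fin n) ℝ) := Matrix.linftyOpNormedRing
  letI : NormedAlgebra ℝ (Matrix (Fin n) (Fin n) ℝ) := Matrix.linftyOpNormedAlgebra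
  letI : NormedAlgebra ℚ (Matrix (Fin n) (Fin n) ℝ) := Matrix.linftyOpNormedAlgebra
  exact NormedSpace.exp_continuous.comp ((continuous_neg.comp continuous_id).smul continuous_const)

lemma expT (A : Matrix (Fin n) (Fin n) ℝ) (τ : ℝ) :
    NormedSpace.exp (-τ • Aᵀ) = (NormedSpace.exp (-τ • A))ᵀ := by
  rw [← Matrix.transpose_smul, Matrix.exp_transpose]

/-- The candidate control kernel. -/
noncomputable def lqW (A : Matrix (Fin n) (Fin n) ℝ) (B : Matrix (Fin n) (Fin k) ℝ)
    (p : Fin n → ℝ) (τ : ℝ) : Fin k → ℝ :=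
  Bᵀ *ᵥ (NormedSpace.exp (-τ • Aᵀ) *ᵥ p)

lemma lqW_cont (A : Matrix (Fin n) (Fin n) ℝ) (B : Matrix (Fin n) (Fin k) ℝ) (p : Fin n → ℝ) :
    Continuous fun τ => lqW A B p τ :=
  continuous_const.matrix_mulVec ((expCont Aᵀ).matrix_mulVec continuous_const)

lemma integrand_eq (A : Matrix (Fin n) (Fin n) ℝ) (B : Matrix (Fin n) (Fin k) ℝ)
    (p q : Fin n → ℝ) (τ : ℝ) :
    p ⬝ᵥ ((NormedSpace.exp (-τ • A) * B * Bᵀ * NormedSpace.exp (-τ • Aᵀ)) *ᵥ q)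
      = lqW A B p τ ⬝ᵥ lqW A B q τ := by
  set E := NormedSpace.exp (-τ • A) with hE
  have h1 : E * B * Bᵀ * NormedSpace.exp (-τ • Aᵀ) = (E * B) * (Bᵀ * Eᵀ) := by
    rw [expT, ← hE, Matrix.mul_assoc (E * B) Bᵀ Eᵀ]
  have h2 : E * B = (Bᵀ * Eᵀ)ᵀ := by simp [Matrix.transpose_mul]
  rw [h1, ← Matrix.mulVec_mulVec, Matrix.dotProduct_mulVec, h2, Matrix.vecMul_transpose]
  simp only [lqW, expT, ← Matrix.mulVec_mulVec]
  rfl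

lemma entry_cont (A : Matrix (Fin n) (Fin n) ℝ) (B : Matrix (Fin n) (Fin k) ℝ) (i j : Fin n) :
    Continuous fun τ : ℝ =>
      (NormedSpace.exp (-τ • A) * B * Bᵀ * NormedSpace.exp (-τ • Aᵀ)) i j :=
  ((((expCont A).matrix_mul continuous_const).matrix_mul continuous_const).matrix_mul
    (expCont Aᵀ)).matrix_elem i j

lemma gram_bilin (A : Matrix (Fin n) (Fin n) ℝ) (B : Matrix (Fin n) (Fin k) ℝ) (T : ℝ)
    (p q : Fin n → ℝ) :
    p ⬝ᵥ (Gram A B T *ᵥ q) = ∫ τ in (0:ℝ)..T,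
      p ⬝ᵥ ((NormedSpace.exp (-τ • A) * B * Bᵀ * NormedSpace.exp (-τ • Aᵀ)) *ᵥ q) := by
  have hc := entry_cont A B
  have hint : ∀ (i : Fin n) (j : Fin n), IntervalIntegrable
      (fun τ => p i * ((NormedSpace.exp (-τ • A) * B * Bᵀ * NormedSpace.exp (-τ • Aᵀ)) i j
        * q j)) MeasureTheory.volume 0 T :=
    fun i j => (continuous_const.mul ((hc i j).mul continuous_const)).intervalIntegrable _ _
  have hrhs : ∀ τ : ℝ,
      p ⬝ᵥ ((NormedSpace.exp (-τ • A) * B * Bᵀ * NormedSpace.exp (-τ • Aᵀ)) *ᵥ q)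
        = ∑ i, ∑ j, p i * ((NormedSpace.exp (-τ • A) * B * Bᵀ
            * NormedSpace.exp (-τ • Aᵀ)) i j * q j) := by
    intro τ; simp [dotProduct, Matrix.mulVec, Finset.mul_sum]
  rw [intervalIntegral.integral_congr (g := fun τ => ∑ i, ∑ j,
        p i * ((NormedSpace.exp (-τ • A) * B * Bᵀ * NormedSpace.exp (-τ • Aᵀ)) i j * q j))
      (fun τ _ => hrhs τ)]
  have hint2 : ∀ i : Fin n, IntervalIntegrable (fun τ => ∑ j, p i *
      ((NormedSpace.exp (-τ • A) * B * Bᵀ * NormedSpace.exp (-τ • Aᵀ)) i j * q j))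
      MeasureTheory.volume 0 T :=
    fun i => (continuous_finset_sum _ fun j _ =>
      continuous_const.mul ((hc i j).mul continuous_const)).intervalIntegrable _ _
  rw [intervalIntegral.integral_finset_sum (f := fun i τ => ∑ j, p i *
        ((NormedSpace.exp (-τ • A) * B * Bᵀ * NormedSpace.exp (-τ • Aᵀ)) i j * q j))
      (fun i _ => hint2 i)]
  rw [Finset.sum_congr rfl (fun i _ => intervalIntegral.integral_finset_sum (f := fun j τ => p i *
        ((NormedSpace.exp (-τ • A) * B * Bᵀ * NormedSpace.exp (-τ • Aᵀ)) i j * q j))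
      (fun j _ => hint i j))]
  simp only [intervalIntegral.integral_const_mul, intervalIntegral.integral_mul_const]
  simp [dotProduct, Gram, Matrix.mulVec, Finset.mul_sum]

lemma gram_dot (A : Matrix (Fin n) (Fin n) ℝ) (B : Matrix (Fin n) (Fin k) ℝ) (T : ℝ)
    (p q : Fin n → ℝ) :
    p ⬝ᵥ (Gram A B T *ᵥ q) = ∫ τ in (0:ℝ)..T, lqW A B p τ ⬝ᵥ lqW A B q τ := by
  rw [gram_bilin A B T p q]
  exact intervalIntegral.integral_congr fun τ _ => integrand_eq A B p q τ

/-- dot product with a fixed vector, as a CLM on `Fin n → ℝ`. -/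
noncomputable def dotCLM (p : Fin n → ℝ) : (Fin n → ℝ) →L[ℝ] ℝ :=
  LinearMap.toContinuousLinearMap
    { toFun := fun y => p ⬝ᵥ y
      map_add' := fun x y => dotProduct_add p x y
      map_smul' := fun c x => by simp [dotProduct_smul] }

@[simp] lemma dotCLM_apply (p y : Fin n → ℝ) : dotCLM p y = p ⬝ᵥ y := rfl

lemma steering (A : Matrix (Fin n) (Fin n) ℝ) (B : Matrix (Fin n) (Fin k) ℝ) (T : ℝ)
    (u : ℝ → Fin k → ℝ) (hu : Continuous u) (p : Fin n → ℝ) :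
    p ⬝ᵥ (∫ τ in (0:ℝ)..T, NormedSpace.exp (-τ • A) *ᵥ (B *ᵥ u τ))
      = ∫ τ in (0:ℝ)..T, lqW A B p τ ⬝ᵥ u τ := by
  have hfc : Continuous fun τ : ℝ => NormedSpace.exp (-τ • A) *ᵥ (B *ᵥ u τ) :=
    (expCont A).matrix_mulVec (continuous_const.matrix_mulVec hu)
  have h1 := (dotCLM p).intervalIntegral_comp_comm
    (hfc.intervalIntegrable (0 : ℝ) T) (μ := MeasureTheory.volume)
  simp only [dotCLM_apply] at h1
  rw [← h1]
  refine intervalIntegral.integral_congr fun τ _ => ?_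
  rw [Matrix.dotProduct_mulVec, ← Matrix.mulVec_transpose,
    Matrix.dotProduct_mulVec (Matrix.transpose _ *ᵥ p) B (u τ), ← Matrix.mulVec_transpose]
  rw [lqW, ← Matrix.transpose_smul, Matrix.exp_transpose]

/-- one inductive step of the analytic-vanishing argument. -/
lemma step (M : Matrix (Fin n) (Fin n) ℝ) (B : Matrix (Fin n) (Fin k) ℝ) (T : ℝ) (hT : 0 < T)
    (q : Fin n → ℝ)
    (h : ∀ τ ∈ Set.Icc (0:ℝ) T, Bᵀ *ᵥ (NormedSpace.exp (-τ • M) *ᵥ q) = 0) :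
    ∀ τ ∈ Set.Icc (0:ℝ) T, Bᵀ *ᵥ (NormedSpace.exp (-τ • M) *ᵥ (M *ᵥ q)) = 0 := by
  letI : NormedRing (Matrix (Fin n) (Fin n) ℝ) := Matrix.linftyOpNormedRing
  letI : NormedAlgebra ℝ (Matrix (Fin n) (Fin n) ℝ) := Matrix.linftyOpNormedAlgebra
  letI : NormedAlgebra ℚ (Matrix (Fin n) (Fin n) ℝ) := Matrix.linftyOpNormedAlgebra
  have hg : Continuous fun τ : ℝ => Bᵀ *ᵥ (NormedSpace.exp (-τ • M) *ᵥ (M *ᵥ q)) :=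
    continuous_const.matrix_mulVec ((expCont M).matrix_mulVec continuous_const)
  have hIoo : ∀ τ₀ ∈ Set.Ioo (0:ℝ) T,
      Bᵀ *ᵥ (NormedSpace.exp (-τ₀ • M) *ᵥ (M *ᵥ q)) = 0 := by
    intro τ₀ hτ₀
    funext i
    let ψ : Matrix (Fin n) (Fin n) ℝ →L[ℝ] ℝ := LinearMap.toContinuousLinearMap
      { toFun := fun X => (Bᵀ *ᵥ (X *ᵥ q)) i
        map_add' := fun X Y => by simp [Matrix.add_mulVec, Matrix.mulVec_add]
        map_smul' := fun c X => by simp [Matrix.smul_mulVec, Matrix.mulVec_smul] }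
    have hψ : ∀ X, ψ X = (Bᵀ *ᵥ (X *ᵥ q)) i := fun _ => rfl
    have hD : HasDerivAt (fun τ : ℝ => NormedSpace.exp (-τ • M))
        (-(NormedSpace.exp (-τ₀ • M) * M)) τ₀ := by
      have h := HasDerivAt.scomp (𝕜 := ℝ) τ₀
        (hasDerivAt_exp_smul_const (𝕂 := ℝ) M (-τ₀)) (hasDerivAt_neg τ₀)
      convert h using 1
      · rfl
      · rfl
      · rfl
      · funext τ; simp [neg_smul]; rfl
      · simp; rfl
    have hD' : HasDerivAt (fun τ : ℝ => ψ (NormedSpace.exp (-τ • M)))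
        (ψ (-(NormedSpace.exp (-τ₀ • M) * M))) τ₀ :=
      ψ.hasFDerivAt.comp_hasDerivAt τ₀ hD
    have hEq : (fun τ : ℝ => ψ (NormedSpace.exp (-τ • M))) =ᶠ[nhds τ₀] fun _ => (0:ℝ) := by
      filter_upwards [Ioo_mem_nhds hτ₀.1 hτ₀.2] with τ hτ
      rw [hψ]
      have := h τ ⟨hτ.1.le, hτ.2.le⟩
      rw [this]; rfl
    have h0 : HasDerivAt (fun _ : ℝ => (0:ℝ)) (ψ (-(NormedSpace.exp (-τ₀ • M) * M))) τ₀ :=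
      hEq.hasDerivAt_iff.mp hD'
    have hz : ψ (-(NormedSpace.exp (-τ₀ • M) * M)) = 0 :=
      h0.unique (hasDerivAt_const τ₀ 0)
    have : ψ (NormedSpace.exp (-τ₀ • M) * M) = 0 := by
      rwa [map_neg, neg_eq_zero] at hz
    rw [hψ, ← Matrix.mulVec_mulVec] at this
    simpa using this
  intro τ hτ
  have hclos : Set.EqOn (fun τ : ℝ => Bᵀ *ᵥ (NormedSpace.exp (-τ • M) *ᵥ (M *ᵥ q)))
      (fun _ => 0) (closure (Set.Ioo (0:ℝ) T)) :=
    (Set.EqOn.closure (fun x hx => hIoo x hx) hg continuous_const)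
  exact hclos (by rwa [closure_Ioo hT.ne] : τ ∈ closure (Set.Ioo (0:ℝ) T))

lemma vanish (A : Matrix (Fin n) (Fin n) ℝ) (B : Matrix (Fin n) (Fin k) ℝ)
    (hKalman : Submodule.span ℝ
      {v : Fin n → ℝ | ∃ j < n, ∃ x : Fin k → ℝ, v = (A ^ j * B) *ᵥ x} = ⊤)
    (T : ℝ) (hT : 0 < T) (p : Fin n → ℝ)
    (h : ∀ τ ∈ Set.Icc (0:ℝ) T, Bᵀ *ᵥ (NormedSpace.exp (-τ • Aᵀ) *ᵥ p) = 0) :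
    p = 0 := by
  have induct : ∀ j : ℕ, ∀ τ ∈ Set.Icc (0:ℝ) T,
      Bᵀ *ᵥ (NormedSpace.exp (-τ • Aᵀ) *ᵥ ((Aᵀ ^ j) *ᵥ p)) = 0 := by
    intro j
    induction j with
    | zero => simpa using h
    | succ j ih =>
      have := step Aᵀ B T hT ((Aᵀ ^ j) *ᵥ p) ih
      intro τ hτ
      have e : Aᵀ ^ (j+1) *ᵥ p = Aᵀ *ᵥ (Aᵀ ^ j *ᵥ p) := by
        rw [Matrix.mulVec_mulVec, ← pow_succ']
      rw [e]; exact this τ hτ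
  have at0 : ∀ j : ℕ, Bᵀ *ᵥ ((Aᵀ ^ j) *ᵥ p) = 0 := by
    intro j
    have := induct j 0 ⟨le_refl 0, hT.le⟩
    simpa [NormedSpace.exp_zero] using this
  have orth : ∀ w ∈ {v : Fin n → ℝ | ∃ j < n, ∃ x : Fin k → ℝ, v = (A ^ j * B) *ᵥ x},
      p ⬝ᵥ w = 0 := by
    rintro w ⟨j, -, x, rfl⟩
    rw [Matrix.dotProduct_mulVec, ← Matrix.mulVec_transpose, Matrix.transpose_mul,
      Matrix.transpose_pow, ← Matrix.mulVec_mulVec, at0 j, zero_dotProduct]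
  have all : ∀ w : Fin n → ℝ, p ⬝ᵥ w = 0 := by
    intro w
    have hw : w ∈ Submodule.span ℝ
        {v : Fin n → ℝ | ∃ j < n, ∃ x : Fin k → ℝ, v = (A ^ j * B) *ᵥ x} := by
      rw [hKalman]; trivial
    induction hw using Submodule.span_induction with
    | mem w hw => exact orth _ hw
    | zero => exact dotProduct_zero p
    | add a b _ _ ha hb => rw [dotProduct_add, ha, hb, add_zero]
    | smul c a _ ha => rw [dotProduct_smul, ha, smul_zero]
  exact dotProduct_self_eq_zero.mp (all p)

lemma gram_isUnit (A : Matrix (Fin n) (Fin n) ℝ) (B : Matrix (Fin n) (Fin k) ℝ)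
    (hKalman : Submodule.span ℝ
      {v : Fin n → ℝ | ∃ j < n, ∃ x : Fin k → ℝ, v = (A ^ j * B) *ᵥ x} = ⊤)
    (T : ℝ) (hT : 0 < T) : IsUnit (Gram A B T) := by
  refine Matrix.mulVec_injective_iff_isUnit.mp fun a b hab => ?_
  by_contra hne
  have hp0 : a - b ≠ 0 := sub_ne_zero.mpr hne
  have hGp : Gram A B T *ᵥ (a - b) = 0 := by
    rw [Matrix.mulVec_sub, hab, sub_self]
  have hquad : (a - b) ⬝ᵥ (Gram A B T *ᵥ (a - b)) = 0 := by
    rw [hGp, dotProduct_zero]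
  have hbil := gram_dot A B T (a - b) (a - b)
  have hwnonneg : ∀ x : ℝ, 0 ≤ lqW A B (a - b) x ⬝ᵥ lqW A B (a - b) x := fun x => by
    simpa [dotProduct] using
      Finset.sum_nonneg fun i (_ : i ∈ Finset.univ) =>
        mul_self_nonneg (lqW A B (a - b) x i)
  have hexists : ∃ c ∈ Set.Icc (0:ℝ) T, 0 < lqW A B (a - b) c ⬝ᵥ lqW A B (a - b) c := by
    by_contra h'
    push_neg at h'
    have hzero : ∀ τ ∈ Set.Icc (0:ℝ) T,
        Bᵀ *ᵥ (NormedSpace.exp (-τ • Aᵀ) *ᵥ (a - b)) = 0 := by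
      intro τ hτ
      have h1 : lqW A B (a - b) τ ⬝ᵥ lqW A B (a - b) τ = 0 :=
        le_antisymm (h' τ hτ) (hwnonneg τ)
      exact dotProduct_self_eq_zero.mp h1
    exact hp0 (vanish A B hKalman T hT (a - b) hzero)
  have hwc : Continuous fun τ => lqW A B (a - b) τ ⬝ᵥ lqW A B (a - b) τ :=
    (lqW_cont A B (a - b)).dotProduct (lqW_cont A B (a - b))
  have hpos : 0 < ∫ τ in (0:ℝ)..T, lqW A B (a - b) τ ⬝ᵥ lqW A B (a - b) τ :=
    intervalIntegral.integral_pos hT hwc.continuousOn (fun x _ => hwnonneg x) hexists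
  rw [hbil] at hquad
  exact absurd hquad hpos.ne'

end LQ8Aux

open LQ8Aux in
/-- under the Kalman condition, the optimal cost of the LQ problem is
`S_T(x₁,x₂) = ½ p₀* Γ_T p₀ = ½ (e^{-TA}x₂ - x₁)* Γ_T⁻¹ (e^{-TA}x₂ - x₁)` where
`p₀ = Γ_T⁻¹ (e^{-TA}x₂ - x₁)`.  The infimum is over (continuous) controls steering
`x₁` to `x₂` in time `T`, the trajectory being
`x_u(t) = e^{tA}(x₁ + ∫₀ᵗ e^{-τA} B u(τ) dτ)`. -/
theorem optimal_cost_LQ {n k : ℕ} (hk : 1 ≤ k) (hkn : k ≤ n)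
    (A : Matrix (Fin n) (Fin n) ℝ) (B : Matrix (Fin n) (Fin k) ℝ)
    (hKalman : Submodule.span ℝ
      {v : Fin n → ℝ | ∃ j < n, ∃ x : Fin k → ℝ, v = (A ^ j * B) *ᵥ x} = ⊤)
    (T : ℝ) (hT : 0 < T) (x₁ x₂ : Fin n → ℝ) :
    sInf {c : ℝ | ∃ u : ℝ → Fin k → ℝ, Continuous u ∧
        NormedSpace.exp (T • A) *ᵥ
          (x₁ + ∫ τ in (0:ℝ)..T, NormedSpace.exp (-τ • A) *ᵥ (B *ᵥ u τ)) = x₂ ∧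
        c = (1/2) * ∫ s in (0:ℝ)..T, ∑ i, (u s i) ^ 2}
      = (1/2) * (((Gram A B T)⁻¹ *ᵥ (NormedSpace.exp (-T • A) *ᵥ x₂ - x₁)) ⬝ᵥ
          (Gram A B T *ᵥ ((Gram A B T)⁻¹ *ᵥ (NormedSpace.exp (-T • A) *ᵥ x₂ - x₁)))) ∧
    (1/2) * (((Gram A B T)⁻¹ *ᵥ (NormedSpace.exp (-T • A) *ᵥ x₂ - x₁)) ⬝ᵥ
          (Gram A B T *ᵥ ((Gram A B T)⁻¹ *ᵥ (NormedSpace.exp (-T • A) *ᵥ x₂ - x₁))))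
      = (1/2) * ((NormedSpace.exp (-T • A) *ᵥ x₂ - x₁) ⬝ᵥ
          ((Gram A B T)⁻¹ *ᵥ (NormedSpace.exp (-T • A) *ᵥ x₂ - x₁))) := by
  classical
  set S : Set ℝ := {c : ℝ | ∃ u : ℝ → Fin k → ℝ, Continuous u ∧
      NormedSpace.exp (T • A) *ᵥ
        (x₁ + ∫ τ in (0:ℝ)..T, NormedSpace.exp (-τ • A) *ᵥ (B *ᵥ u τ)) = x₂ ∧
      c = (1/2) * ∫ s in (0:ℝ)..T, ∑ i, (u s i) ^ 2} with hS
  set G : Matrix (Fin n) (Fin n) ℝ := Gram A B T with hG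
  set v : Fin n → ℝ := NormedSpace.exp (-T • A) *ᵥ x₂ - x₁ with hv
  set p₀ : Fin n → ℝ := G⁻¹ *ᵥ v with hp₀
  have hGu : IsUnit G := gram_isUnit A B hKalman T hT
  have hGright : G * G⁻¹ = 1 :=
    Matrix.mul_nonsing_inv _ ((Matrix.isUnit_iff_isUnit_det _).mp hGu)
  have hGv : G *ᵥ p₀ = v := by
    rw [hp₀, Matrix.mulVec_mulVec, hGright, Matrix.one_mulVec]
  -- exponential inverses
  have hcomm : Commute (-T • A) (T • A) := ((Commute.refl A).smul_left (-T)).smul_right T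
  have hinv1 : NormedSpace.exp (-T • A) * NormedSpace.exp (T • A) = 1 := by
    letI : NormedRing (Matrix (Fin n) (Fin n) ℝ) := Matrix.linftyOpNormedRing
    letI : NormedAlgebra ℝ (Matrix (Fin n) (Fin n) ℝ) := Matrix.linftyOpNormedAlgebra
    letI : NormedAlgebra ℚ (Matrix (Fin n) (Fin n) ℝ) := Matrix.linftyOpNormedAlgebra
    rw [← Matrix.exp_add_of_commute _ _ hcomm]
    rw [show -T • A + T • A = 0 by rw [neg_smul, neg_add_cancel], NormedSpace.exp_zero]
  have hinv2 : NormedSpace.exp (T • A) * NormedSpace.exp (-T • A) = 1 := by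
    letI : NormedRing (Matrix (Fin n) (Fin n) ℝ) := Matrix.linftyOpNormedRing
    letI : NormedAlgebra ℝ (Matrix (Fin n) (Fin n) ℝ) := Matrix.linftyOpNormedAlgebra
    letI : NormedAlgebra ℚ (Matrix (Fin n) (Fin n) ℝ) := Matrix.linftyOpNormedAlgebra
    rw [← Matrix.exp_add_of_commute _ _ hcomm.symm]
    rw [show T • A + -T • A = 0 by rw [neg_smul, add_neg_cancel], NormedSpace.exp_zero]
  have hconstr : ∀ Y : Fin n → ℝ,
      NormedSpace.exp (T • A) *ᵥ (x₁ + Y) = x₂ ↔ Y = v := by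
    intro Y
    constructor
    · intro hY
      have h2 : NormedSpace.exp (-T • A) *ᵥ (NormedSpace.exp (T • A) *ᵥ (x₁ + Y))
          = NormedSpace.exp (-T • A) *ᵥ x₂ := by rw [hY]
      rw [Matrix.mulVec_mulVec, hinv1, Matrix.one_mulVec] at h2
      rw [hv, ← h2]; abel
    · rintro rfl
      have h3 : x₁ + v = NormedSpace.exp (-T • A) *ᵥ x₂ := by rw [hv]; abel
      rw [h3, Matrix.mulVec_mulVec, hinv2, Matrix.one_mulVec]
  have hsq : ∀ w : Fin k → ℝ, w ⬝ᵥ w = ∑ i, (w i) ^ 2 := fun w => by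
    simp [dotProduct, pow_two]
  -- cost of the candidate control
  have hcostW : ∀ q : Fin n → ℝ,
      (∫ s in (0:ℝ)..T, ∑ i, (lqW A B q s i) ^ 2) = q ⬝ᵥ (G *ᵥ q) := by
    intro q
    rw [hG, gram_dot A B T q q]
    exact intervalIntegral.integral_congr fun s _ => (hsq (lqW A B q s)).symm
  -- the candidate steers x₁ to x₂
  have hY₀ : (∫ τ in (0:ℝ)..T, NormedSpace.exp (-τ • A) *ᵥ (B *ᵥ lqW A B p₀ τ)) = v := by
    have hdots : ∀ p : Fin n → ℝ,
        p ⬝ᵥ (∫ τ in (0:ℝ)..T, NormedSpace.exp (-τ • A) *ᵥ (B *ᵥ lqW A B p₀ τ)) = p ⬝ᵥ v := by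
      intro p
      rw [steering A B T _ (lqW_cont A B p₀) p, ← gram_dot A B T p p₀, ← hG, hGv]
    funext i
    have := hdots (Pi.single i 1)
    rwa [single_dotProduct, single_dotProduct, one_mul, one_mul] at this
  have mem : (1/2) * (p₀ ⬝ᵥ (G *ᵥ p₀)) ∈ S := by
    refine ⟨fun τ => lqW A B p₀ τ, lqW_cont A B p₀, ?_, ?_⟩
    · rw [hconstr _]; exact hY₀
    · rw [hcostW p₀]
  have lb : ∀ c ∈ S, (1/2) * (p₀ ⬝ᵥ (G *ᵥ p₀)) ≤ c := by
    rintro c ⟨u, hu, hYc, rfl⟩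
    have hY : (∫ τ in (0:ℝ)..T, NormedSpace.exp (-τ • A) *ᵥ (B *ᵥ u τ)) = v :=
      (hconstr _).mp hYc
    have hwcont : Continuous fun τ => lqW A B p₀ τ := lqW_cont A B p₀
    have hcu : Continuous fun s => ∑ i, (u s i) ^ 2 :=
      continuous_finset_sum _ fun i _ => ((continuous_apply i).comp hu).pow 2
    have hcw : Continuous fun s => ∑ i, (lqW A B p₀ s i) ^ 2 :=
      continuous_finset_sum _ fun i _ => ((continuous_apply i).comp hwcont).pow 2
    have hcuw : Continuous fun s => ∑ i, lqW A B p₀ s i * u s i :=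
      continuous_finset_sum _ fun i _ =>
        ((continuous_apply i).comp hwcont).mul ((continuous_apply i).comp hu)
    have hcross : (∫ s in (0:ℝ)..T, ∑ i, lqW A B p₀ s i * u s i) = p₀ ⬝ᵥ (G *ᵥ p₀) := by
      have h1 := steering A B T u hu p₀
      rw [hY] at h1
      have h2 : (∫ s in (0:ℝ)..T, ∑ i, lqW A B p₀ s i * u s i)
          = ∫ τ in (0:ℝ)..T, lqW A B p₀ τ ⬝ᵥ u τ :=
        intervalIntegral.integral_congr fun s _ => by simp [dotProduct]
      rw [h2, ← h1, hGv]
    have hwsq : (∫ s in (0:ℝ)..T, ∑ i, (lqW A B p₀ s i) ^ 2) = p₀ ⬝ᵥ (G *ᵥ p₀) := hcostW p₀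
    have hpt : ∀ s : ℝ, (∑ i, (u s i - lqW A B p₀ s i) ^ 2)
        = ((∑ i, (u s i) ^ 2) - 2 * (∑ i, lqW A B p₀ s i * u s i))
            + (∑ i, (lqW A B p₀ s i) ^ 2) := by
      intro s
      rw [Finset.mul_sum, ← Finset.sum_sub_distrib, ← Finset.sum_add_distrib]
      exact Finset.sum_congr rfl fun i _ => by ring
    have h0 : 0 ≤ ∫ s in (0:ℝ)..T, ∑ i, (u s i - lqW A B p₀ s i) ^ 2 :=
      intervalIntegral.integral_nonneg hT.le fun s _ =>
        Finset.sum_nonneg fun i _ => sq_nonneg _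
    have hsplit : (∫ s in (0:ℝ)..T, ∑ i, (u s i - lqW A B p₀ s i) ^ 2)
        = ((∫ s in (0:ℝ)..T, ∑ i, (u s i) ^ 2)
            - 2 * (∫ s in (0:ℝ)..T, ∑ i, lqW A B p₀ s i * u s i))
          + (∫ s in (0:ℝ)..T, ∑ i, (lqW A B p₀ s i) ^ 2) := by
      rw [intervalIntegral.integral_congr (g := fun s =>
          ((∑ i, (u s i) ^ 2) - 2 * (∑ i, lqW A B p₀ s i * u s i))
            + (∑ i, (lqW A B p₀ s i) ^ 2)) (fun s _ => hpt s)]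
      rw [intervalIntegral.integral_add (f := fun s => (∑ i, (u s i) ^ 2) - 2 * (∑ i, lqW A B p₀ s i * u s i))
          (g := fun s => ∑ i, (lqW A B p₀ s i) ^ 2)
          ((hcu.sub (continuous_const.mul hcuw)).intervalIntegrable _ _)
          (hcw.intervalIntegrable _ _),
        intervalIntegral.integral_sub (f := fun s => ∑ i, (u s i) ^ 2)
          (g := fun s => 2 * (∑ i, lqW A B p₀ s i * u s i)) (hcu.intervalIntegrable _ _)
          ((continuous_const.mul hcuw).intervalIntegrable _ _),
        intervalIntegral.integral_const_mul]
    rw [hsplit, hcross, hwsq] at h0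
    linarith
  have hfirst : sInf S = (1/2) * (p₀ ⬝ᵥ (G *ᵥ p₀)) :=
    le_antisymm (csInf_le ⟨_, lb⟩ mem) (le_csInf ⟨_, mem⟩ lb)
  refine ⟨hfirst, ?_⟩
  rw [hGv, dotProduct_comm, hp₀]
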